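/- Let O₁ = [C; CA₁; …; CA₁^{N−1}] and O₂ = [C; CA₂; …; CA₂^{N−1}] for matrices A₁, A₂ ∈ ℝ^{N×N} and C ∈ ℝ^{m×N}, and suppose ker O₁ ∩ ker O₂ = {0} and moreover ker O₁ ∩ e^{−A₁τ}·ker O₂ = {0} for a given τ > 0. Then any nonzero initial deviation z₀ ≠ 0 produces a nonzero output at some time under the switched dynamics (A₁ on [0,τ), A₂ afterwards); i.e., there exists t ≥ 0 with C·z(t) ≠ 0 where z(0) = z₀. -/

import Mathlib

open Matrix

set_option maxHeartbeats 1000000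

section Aux

variable {N m : ℕ}

attribute [local instance] Matrix.linftyOpNormedRing Matrix.linftyOpNormedAlgebra

/-- Applying a linear functional (row of `C` after `mulVec` with fixed vector `w`)
to a matrix, as a continuous linear map. -/
noncomputable def phiCLM (C : Matrix (Fin m) (Fin N) ℝ) (w : Fin N → ℝ) (i : Fin m) :
    Matrix (Fin N) (Fin N) ℝ →L[ℝ] ℝ :=
  LinearMap.toContinuousLinearMap
    { toFun := fun M => (C.mulVec (M.mulVec w)) i
      map_add' := by
        intro M M'; simp [Matrix.add_mulVec, Matrix.mulVec_add]
      map_smul' := by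
        intro c M; simp [Matrix.smul_mulVec, Matrix.mulVec_smul] }

lemma phiCLM_apply (C : Matrix (Fin m) (Fin N) ℝ) (w : Fin N → ℝ) (i : Fin m)
    (M : Matrix (Fin N) (Fin N) ℝ) :
    phiCLM C w i M = (C.mulVec (M.mulVec w)) i := rfl

/-- Expansion of the output along the exponential as a series. -/
lemma phi_exp_eq_tsum (C : Matrix (Fin m) (Fin N) ℝ) (A : Matrix (Fin N) (Fin N) ℝ)
    (w : Fin N → ℝ) (i : Fin m) (s : ℝ) :
    phiCLM C w i (NormedSpace.exp (s • A)) =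
      ∑' n : ℕ, ((n.factorial : ℝ)⁻¹) • phiCLM C w i ((s • A) ^ n) :=
  calc phiCLM C w i (NormedSpace.exp (s • A))
      = phiCLM C w i (∑' n : ℕ, ((n.factorial : ℝ)⁻¹) • (s • A) ^ n) := by
        rw [NormedSpace.exp_eq_tsum ℝ]
    _ = ∑' n : ℕ, phiCLM C w i (((n.factorial : ℝ)⁻¹) • (s • A) ^ n) :=
        (phiCLM C w i).map_tsum (NormedSpace.expSeries_summable' (𝕂 := ℝ) (s • A))
    _ = ∑' n : ℕ, ((n.factorial : ℝ)⁻¹) • phiCLM C w i ((s • A) ^ n) := by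
        simp

/-- If all `C Aᵏ u = 0` then `C exp(sA) (Aᵏ u) = 0`. -/
lemma exp_of_ker (C : Matrix (Fin m) (Fin N) ℝ) (A : Matrix (Fin N) (Fin N) ℝ)
    (u : Fin N → ℝ) (h : ∀ k : ℕ, C.mulVec ((A ^ k).mulVec u) = 0) (s : ℝ) (k : ℕ) :
    C.mulVec ((NormedSpace.exp (s • A)).mulVec ((A ^ k).mulVec u)) = 0 := by
  funext i
  have := phi_exp_eq_tsum C A ((A ^ k).mulVec u) i s
  rw [phiCLM_apply] at this
  rw [show ((0 : Fin m → ℝ) i) = (0 : ℝ) from rfl, this]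
  have hz : ∀ n : ℕ, ((n.factorial : ℝ)⁻¹) • phiCLM C ((A ^ k).mulVec u) i ((s • A) ^ n) = 0 := by
    intro n
    have key : C.mulVec ((A ^ n).mulVec ((A ^ k).mulVec u)) = 0 := by
      have hk := h (n + k)
      rw [pow_add, ← Matrix.mulVec_mulVec] at hk
      exact hk
    rw [phiCLM_apply, smul_pow, Matrix.smul_mulVec, Matrix.mulVec_smul]
    have h0 := congrFun key i
    simp only [Pi.zero_apply] at h0
    simp only [Pi.smul_apply, h0, smul_zero]
  rw [tsum_congr hz, tsum_zero]

/-- Main analyticity-style lemma: if the output of `exp(tA) v` vanishes on a nonempty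
open interval, then all observability terms vanish. -/
lemma obs_of_vanish (C : Matrix (Fin m) (Fin N) ℝ) (A : Matrix (Fin N) (Fin N) ℝ)
    (v : Fin N → ℝ) (a b : ℝ) (hab : a < b)
    (h : ∀ t ∈ Set.Ioo a b, C.mulVec ((NormedSpace.exp (t • A)).mulVec v) = 0) :
    ∀ k : ℕ, C.mulVec ((A ^ k).mulVec v) = 0 := by
  -- Step 1: all "derivative" terms vanish on the interval.
  have step1 : ∀ k : ℕ, ∀ t ∈ Set.Ioo a b,
      C.mulVec ((NormedSpace.exp (t • A)).mulVec ((A ^ k).mulVec v)) = 0 := by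
    intro k
    induction k with
    | zero => intro t ht; simpa using h t ht
    | succ k ih =>
      intro t ht
      funext i
      show (C.mulVec ((NormedSpace.exp (t • A)).mulVec ((A ^ (k + 1)).mulVec v))) i = 0
      -- g t = phiCLM C (A^k v) i (exp (t•A)) vanishes near t, and has derivative
      -- phiCLM C (A^k v) i (exp(t•A) * A) at t.
      set w := (A ^ k).mulVec v with hw
      have hderiv : HasDerivAt (fun u : ℝ => phiCLM C w i (NormedSpace.exp (u • A)))
          (phiCLM C w i (NormedSpace.exp (t • A) * A)) t :=
        (phiCLM C w i).hasFDerivAt.comp_hasDerivAt t (hasDerivAt_exp_smul_const (𝕂 := ℝ) A t)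
      have hev : (fun u : ℝ => phiCLM C w i (NormedSpace.exp (u • A))) =ᶠ[nhds t] fun _ => 0 := by
        filter_upwards [isOpen_Ioo.mem_nhds ht] with u hu
        rw [phiCLM_apply]
        have := congrFun (ih u hu) i
        simpa using this
      have hd0 : deriv (fun u : ℝ => phiCLM C w i (NormedSpace.exp (u • A))) t = 0 := by
        rw [Filter.EventuallyEq.deriv_eq hev]; simp
      have := hderiv.deriv
      rw [hd0] at this
      have key : phiCLM C w i (NormedSpace.exp (t • A) * A) = 0 := this.symm
      rw [phiCLM_apply, ← Matrix.mulVec_mulVec, hw] at key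
      rw [pow_succ', ← Matrix.mulVec_mulVec]
      exact key
  -- Step 2: pick t₀ in the interval; then u := exp(t₀ A) v is in the kernel.
  obtain ⟨t₀, ht₀⟩ : ∃ t₀, t₀ ∈ Set.Ioo a b := ⟨(a + b) / 2, by constructor <;> linarith⟩
  set u := (NormedSpace.exp (t₀ • A)).mulVec v with hu
  have hcomm : ∀ k : ℕ, ∀ s : ℝ,
      (A ^ k) * NormedSpace.exp (s • A) = NormedSpace.exp (s • A) * (A ^ k) := by
    intro k s
    exact (((Commute.refl A).pow_left k).smul_right s).exp_right |>.eq
  have hker : ∀ k : ℕ, C.mulVec ((A ^ k).mulVec u) = 0 := by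
    intro k
    have hswap : (A ^ k).mulVec u =
        (NormedSpace.exp (t₀ • A)).mulVec ((A ^ k).mulVec v) := by
      rw [hu, Matrix.mulVec_mulVec, Matrix.mulVec_mulVec, hcomm]
    rw [hswap]
    exact step1 k t₀ ht₀
  -- Step 3: transport back through exp(-t₀ A).
  intro k
  have hinv : NormedSpace.exp ((-t₀) • A) * NormedSpace.exp (t₀ • A) = 1 := by
    rw [← Matrix.exp_add_of_commute _ _ (((Commute.refl A).smul_left (-t₀)).smul_right t₀)]
    simp [← add_smul, NormedSpace.exp_zero]
  have hv : v = (NormedSpace.exp ((-t₀) • A)).mulVec u := by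
    rw [hu, Matrix.mulVec_mulVec, hinv, Matrix.one_mulVec]
  have hmat : NormedSpace.exp ((-t₀) • A) * A ^ k * NormedSpace.exp (t₀ • A) = A ^ k := by
    rw [Matrix.mul_assoc, hcomm, ← Matrix.mul_assoc, hinv, Matrix.one_mul]
  have hswap : (A ^ k).mulVec v =
      (NormedSpace.exp ((-t₀) • A)).mulVec ((A ^ k).mulVec u) := by
    rw [hu]
    simp only [Matrix.mulVec_mulVec]
    rw [← Matrix.mul_assoc, hmat]
  rw [hswap]
  exact exp_of_ker C A u hker (-t₀) k

end Aux

/-- If the intersection of the observability kernels (with the flow-shifted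
second kernel) is trivial, any nonzero initial deviation produces a nonzero
output at some time under the switched dynamics. -/
theorem switched_detectability
    {N m : ℕ} (A₁ A₂ : Matrix (Fin N) (Fin N) ℝ) (C : Matrix (Fin m) (Fin N) ℝ)
    (τ : ℝ) (hτ : 0 < τ)
    (hker : ∀ w : Fin N → ℝ,
      (∀ k < N, C.mulVec ((A₁ ^ k).mulVec w) = 0) →
      (∀ k < N, C.mulVec ((A₂ ^ k).mulVec w) = 0) → w = 0)
    (hkerτ : ∀ w : Fin N → ℝ,
      (∀ k < N, C.mulVec ((A₁ ^ k).mulVec w) = 0) →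
      (∀ k < N,
        C.mulVec ((A₂ ^ k).mulVec ((NormedSpace.exp (τ • A₁)).mulVec w)) = 0) →
      w = 0)
    (z₀ : Fin N → ℝ) (hz₀ : z₀ ≠ 0)
    (z : ℝ → Fin N → ℝ)
    (hz : ∀ t, z t = if t < τ then (NormedSpace.exp (t • A₁)).mulVec z₀
      else (NormedSpace.exp ((t - τ) • A₂)).mulVec
        ((NormedSpace.exp (τ • A₁)).mulVec z₀)) :
    ∃ t ≥ (0 : ℝ), C.mulVec (z t) ≠ 0 := by
  by_contra hcon
  push_neg at hcon
  apply hz₀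
  -- first phase
  have h1 : ∀ k : ℕ, C.mulVec ((A₁ ^ k).mulVec z₀) = 0 := by
    apply obs_of_vanish C A₁ z₀ 0 τ hτ
    intro t ht
    have := hcon t (le_of_lt ht.1)
    rwa [hz t, if_pos ht.2] at this
  -- second phase
  have h2 : ∀ k : ℕ,
      C.mulVec ((A₂ ^ k).mulVec ((NormedSpace.exp (τ • A₁)).mulVec z₀)) = 0 := by
    apply obs_of_vanish C A₂ _ 0 1 one_pos
    intro s hs
    have hge : (0:ℝ) ≤ s + τ := by linarith [hs.1]
    have := hcon (s + τ) hge
    rw [hz (s + τ), if_neg (by linarith [hs.1])] at this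
    simpa using this
  exact hkerτ z₀ (fun k _ => h1 k) (fun k _ => h2 k)
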